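/- arXiv:2003.02934 — 6 statements merged into one kernel-verified Lean document; each statement's English description precedes it below -/
import Mathlib

section
/- Let $P(\lambda) = \begin{bmatrix} A(\lambda) & B(\lambda) \\ -C(\lambda) & D(\lambda) \end{bmatrix}$ be a polynomial system matrix with nonsingular state matrix $A(\lambda)\in\mathbb{F}[\lambda]^{n\times n}$ and transfer function $R(\lambda)$. Then the map $T_\ell : \mathcal{N}_\ell(R) \to \mathcal{N}_\ell(P)$ sending $y(\lambda)^T$ to $y(\lambda)^T \begin{bmatrix} C(\lambda)A(\lambda)^{-1} & I_p \end{bmatrix}$ is a well-defined bijective linear map between the left nullspace of $R(\lambda)$ and the left nullspace of $P(\lambda)$, both over $\mathbb{F}(\lambda)$. -/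
open Matrix Polynomial

set_option synthInstance.maxHeartbeats 1000000
set_option maxHeartbeats 1000000

/-- The map sending a polynomial matrix to the corresponding matrix of rational functions. -/
noncomputable def ratMat {F : Type*} [Field F] {α β : Type*}
    (M : Matrix α β (Polynomial F)) : Matrix α β (RatFunc F) :=
  M.map (algebraMap (Polynomial F) (RatFunc F))

/-- The map `T_ℓ : y(λ)ᵀ ↦ y(λ)ᵀ [C(λ)A(λ)⁻¹  I_p]` is a well-defined bijective
`F(λ)`-linear map from the left nullspace of the transfer function
`R = D + C A⁻¹ B` onto the left nullspace of the polynomial system matrix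
`P = [A B; -C D]`. -/
theorem leftNullspace_bijection {F : Type*} [Field F] {n m p : ℕ}
    (A : Matrix (Fin n) (Fin n) (Polynomial F))
    (B : Matrix (Fin n) (Fin m) (Polynomial F))
    (C : Matrix (Fin p) (Fin n) (Polynomial F))
    (D : Matrix (Fin p) (Fin m) (Polynomial F))
    (hA : IsUnit (ratMat A).det) :
    (∀ (c : RatFunc F) (y : Fin p → RatFunc F),
        (Sum.elim (Matrix.vecMul (c • y) (ratMat C * (ratMat A)⁻¹)) (c • y) :
            Fin n ⊕ Fin p → RatFunc F)
          = c • Sum.elim (Matrix.vecMul y (ratMat C * (ratMat A)⁻¹)) y) ∧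
    (∀ (y z : Fin p → RatFunc F),
        (Sum.elim (Matrix.vecMul (y + z) (ratMat C * (ratMat A)⁻¹)) (y + z) :
            Fin n ⊕ Fin p → RatFunc F)
          = Sum.elim (Matrix.vecMul y (ratMat C * (ratMat A)⁻¹)) y
            + Sum.elim (Matrix.vecMul z (ratMat C * (ratMat A)⁻¹)) z) ∧
    Set.BijOn
      (fun y : Fin p → RatFunc F =>
        Sum.elim (Matrix.vecMul y (ratMat C * (ratMat A)⁻¹)) y)
      {y | Matrix.vecMul y
            (ratMat D + ratMat C * (ratMat A)⁻¹ * ratMat B) = 0}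
      {v | Matrix.vecMul v
            (Matrix.fromBlocks (ratMat A) (ratMat B) (-(ratMat C))
              (ratMat D)) = 0} := by
  set A' := ratMat A
  set B' := ratMat B
  set C' := ratMat C
  set D' := ratMat D
  refine ⟨?_, ?_, ?_, ?_, ?_⟩
  · intro c y
    ext (i | i) <;> simp [Matrix.smul_vecMul]
  · intro y z
    ext (i | i) <;> simp [Matrix.add_vecMul]

  · -- maps to
    intro y hy
    simp only [Set.mem_setOf_eq] at hy ⊢
    rw [vecMul_fromBlocks]
    ext (i | i)
    · simp [Matrix.vecMul_vecMul, Matrix.mul_assoc, Matrix.nonsing_inv_mul A' hA,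
        Matrix.vecMul_neg]
    · have : y ᵥ* D' + y ᵥ* (C' * A'⁻¹ * B') = 0 := by
        rw [Matrix.vecMul_add] at hy; exact hy
      simpa [Matrix.vecMul_vecMul, Matrix.mul_assoc, add_comm] using congrFun this i
  · -- inj
    intro y _ z _ h
    ext i
    exact congrFun h (Sum.inr i)
  · -- surj
    intro v hv
    simp only [Set.mem_setOf_eq, vecMul_fromBlocks] at hv
    have h1 := congrFun hv
    have hA1 : (v ∘ Sum.inl) ᵥ* A' + (v ∘ Sum.inr) ᵥ* (-C') = 0 := by
      ext i; simpa using congrFun hv (Sum.inl i)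
    have hB1 : (v ∘ Sum.inl) ᵥ* B' + (v ∘ Sum.inr) ᵥ* D' = 0 := by
      ext i; simpa using congrFun hv (Sum.inr i)
    have hx : v ∘ Sum.inl = (v ∘ Sum.inr) ᵥ* (C' * A'⁻¹) := by
      have := congrArg (fun w => w ᵥ* A'⁻¹) hA1
      simp only [Matrix.add_vecMul, Matrix.vecMul_vecMul, Matrix.zero_vecMul,
        Matrix.vecMul_neg, Matrix.neg_vecMul, Matrix.mul_nonsing_inv A' hA] at this
      rw [Matrix.vecMul_one] at this
      rwa [← sub_eq_add_neg, sub_eq_zero] at this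
    refine ⟨v ∘ Sum.inr, ?_, ?_⟩
    · simp only [Set.mem_setOf_eq, Matrix.vecMul_add]
      rw [show C' * A'⁻¹ * B' = (C' * A'⁻¹) * B' from rfl, ← Matrix.vecMul_vecMul, ← hx]
      rw [add_comm]; exact hB1
    · ext (i | i)
      · exact (congrFun hx (i)).symm
      · rfl
end

section
/- Let $L(\lambda) = \begin{bmatrix} A_1\lambda + A_0 & B_1\lambda + B_0 \\ -(C_1\lambda + C_0) & D_1\lambda + D_0 \end{bmatrix}$ be a linear polynomial system matrix with nonsingular state pencil $A_1\lambda + A_0 \in \mathbb{F}[\lambda]^{n\times n}$ and transfer function $T(\lambda) = D_1\lambda + D_0 + (C_1\lambda+C_0)(A_1\lambda+A_0)^{-1}(B_1\lambda+B_0)$. If $u(\lambda) = \begin{bmatrix} y(\lambda) \\ x(\lambda) \end{bmatrix}$ is a polynomial vector in the right nullspace of $L(\lambda)$, then $x(\lambda)$ lies in the right nullspace of $T(\lambda)$; moreover, if the constant matrix $\begin{bmatrix} A_1 \\ C_1 \end{bmatrix}$ has full column rank $n$, then $\deg u(\lambda) = \deg x(\lambda)$. -/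
open Matrix Polynomial

set_option synthInstance.maxHeartbeats 1000000
set_option maxHeartbeats 1000000

/-- A matrix pencil `M₁ λ + M₀` as a polynomial matrix. -/
noncomputable def pencil {F : Type*} [Field F] {α β : Type*}
    (M₁ M₀ : Matrix α β F) : Matrix α β (Polynomial F) :=
  (Polynomial.X : Polynomial F) • M₁.map Polynomial.C + M₀.map Polynomial.C

lemma ratMat_mulVec {F : Type*} [Field F] {α β : Type*} [Fintype β]
    (M : Matrix α β (Polynomial F)) (v : β → Polynomial F) :
    (ratMat M).mulVec (fun j => algebraMap (Polynomial F) (RatFunc F) (v j)) =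
      fun i => algebraMap (Polynomial F) (RatFunc F) (M.mulVec v i) := by
  funext i
  exact ((algebraMap (Polynomial F) (RatFunc F)).map_mulVec M v i).symm

lemma pencil_entry_coeff {F : Type*} [Field F] (a b : F) (p : Polynomial F) (k : ℕ) :
    ((Polynomial.C a * Polynomial.X + Polynomial.C b) * p).coeff (k+1)
      = a * p.coeff k + b * p.coeff (k+1) := by
  rw [add_mul, Polynomial.coeff_add, mul_comm (Polynomial.C a) Polynomial.X, mul_assoc,
    Polynomial.coeff_X_mul, Polynomial.coeff_C_mul, Polynomial.coeff_C_mul]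

lemma pencil_entry_coeff_neg {F : Type*} [Field F] (a b : F) (p : Polynomial F) (k : ℕ) :
    ((-Polynomial.C b + -(Polynomial.C a * Polynomial.X)) * p).coeff (k+1)
      = -(a * p.coeff k + b * p.coeff (k+1)) := by
  have : (-Polynomial.C b + -(Polynomial.C a * Polynomial.X)) * p
      = -((Polynomial.C a * Polynomial.X + Polynomial.C b) * p) := by ring
  rw [this, Polynomial.coeff_neg, pencil_entry_coeff]

/-- For a linear polynomial system matrix `L = [A₁λ+A₀  B₁λ+B₀; -(C₁λ+C₀)  D₁λ+D₀]`
with nonsingular state pencil and transfer function `T`, any polynomial vector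
`u = [y; x]` in the right nullspace of `L` has its bottom part `x` in the right
nullspace of `T`; moreover if `[A₁; C₁]` has full column rank `n`, then
`deg u = deg x`. -/
theorem rightNullspace_pencil_degree {F : Type*} [Field F] {n r' q' : ℕ}
    (A₁ A₀ : Matrix (Fin n) (Fin n) F) (B₁ B₀ : Matrix (Fin n) (Fin r') F)
    (C₁ C₀ : Matrix (Fin q') (Fin n) F) (D₁ D₀ : Matrix (Fin q') (Fin r') F)
    (hA : IsUnit (ratMat (pencil A₁ A₀)).det)
    (y : Fin n → Polynomial F) (x : Fin r' → Polynomial F)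
    (hu : (Matrix.fromBlocks (pencil A₁ A₀) (pencil B₁ B₀)
            (-(pencil C₁ C₀)) (pencil D₁ D₀)).mulVec (Sum.elim y x) = 0) :
    (ratMat (pencil D₁ D₀) + ratMat (pencil C₁ C₀) * (ratMat (pencil A₁ A₀))⁻¹
        * ratMat (pencil B₁ B₀)).mulVec
        (fun j => algebraMap (Polynomial F) (RatFunc F) (x j)) = 0 ∧
    ((Matrix.fromRows A₁ C₁).rank = n →
      (Finset.univ.sup fun i : Fin n ⊕ Fin r' => ((Sum.elim y x) i).degree)
        = Finset.univ.sup fun j : Fin r' => (x j).degree) := by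
  rw [Matrix.fromBlocks_mulVec] at hu
  have htop : (pencil A₁ A₀) *ᵥ y + (pencil B₁ B₀) *ᵥ x = 0 := by
    funext i; exact congrFun hu (Sum.inl i)
  have hbot : (-(pencil C₁ C₀)) *ᵥ y + (pencil D₁ D₀) *ᵥ x = 0 := by
    funext i; exact congrFun hu (Sum.inr i)
  set φ := algebraMap (Polynomial F) (RatFunc F)
  set yr : Fin n → RatFunc F := fun i => φ (y i) with hyr
  set xr : Fin r' → RatFunc F := fun j => φ (x j) with hxr
  have h1 : ratMat (pencil A₁ A₀) *ᵥ yr + ratMat (pencil B₁ B₀) *ᵥ xr = 0 := by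
    rw [hyr, hxr, ratMat_mulVec, ratMat_mulVec]
    funext i
    simp only [Pi.add_apply, Pi.zero_apply, ← map_add]
    rw [show ((pencil A₁ A₀) *ᵥ y) i + ((pencil B₁ B₀) *ᵥ x) i
        = ((pencil A₁ A₀) *ᵥ y + (pencil B₁ B₀) *ᵥ x) i from rfl, htop]
    simp
  have h2 : -(ratMat (pencil C₁ C₀) *ᵥ yr) + ratMat (pencil D₁ D₀) *ᵥ xr = 0 := by
    rw [← Matrix.neg_mulVec]
    have : -(ratMat (pencil C₁ C₀)) = ratMat (-(pencil C₁ C₀)) := by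
      ext i j
      simp [ratMat, Matrix.map_apply, Matrix.neg_apply]
    rw [this, hyr, hxr, ratMat_mulVec, ratMat_mulVec]
    funext i
    simp only [Pi.add_apply, Pi.zero_apply, ← map_add]
    rw [show ((-(pencil C₁ C₀)) *ᵥ y) i + ((pencil D₁ D₀) *ᵥ x) i
        = ((-(pencil C₁ C₀)) *ᵥ y + (pencil D₁ D₀) *ᵥ x) i from rfl, hbot]
    simp
  constructor
  · have hBx : ratMat (pencil B₁ B₀) *ᵥ xr = -(ratMat (pencil A₁ A₀) *ᵥ yr) := by
      rw [eq_neg_iff_add_eq_zero, add_comm]; exact h1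
    rw [Matrix.add_mulVec, ← Matrix.mulVec_mulVec, ← Matrix.mulVec_mulVec, hBx,
      Matrix.mulVec_neg, Matrix.mulVec_mulVec, Matrix.nonsing_inv_mul _ hA,
      Matrix.one_mulVec, Matrix.mulVec_neg]
    have hDx : ratMat (pencil D₁ D₀) *ᵥ xr = ratMat (pencil C₁ C₀) *ᵥ yr := by
      have := h2
      rw [neg_add_eq_zero] at this
      exact this.symm
    rw [hDx]
    simp
  · intro hr
    set D := Finset.univ.sup fun j : Fin r' => (x j).degree with hD
    -- coefficient identities
    have hcoeffA : ∀ (i : Fin n) (k : ℕ),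
        (∑ j, (A₁ i j * (y j).coeff k + A₀ i j * (y j).coeff (k+1)))
        + (∑ j, (B₁ i j * (x j).coeff k + B₀ i j * (x j).coeff (k+1))) = 0 := by
      intro i k
      have h := congrFun htop i
      simp only [mulVec, dotProduct, Pi.add_apply, Pi.zero_apply] at h
      have h2 := congrArg (fun p => Polynomial.coeff p (k+1)) h
      simpa [pencil, Matrix.add_apply, Matrix.smul_apply, Matrix.map_apply, smul_eq_mul,
        Polynomial.finset_sum_coeff, pencil_entry_coeff] using h2
    have hcoeffC : ∀ (i : Fin q') (k : ℕ),
        (∑ j, (-(C₀ i j * (y j).coeff (k+1)) + -(C₁ i j * (y j).coeff k)))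
        + (∑ j, (D₁ i j * (x j).coeff k + D₀ i j * (x j).coeff (k+1))) = 0 := by
      intro i k
      have h := congrFun hbot i
      simp only [mulVec, dotProduct, Pi.add_apply, Pi.zero_apply, Matrix.neg_apply] at h
      have h2 := congrArg (fun p => Polynomial.coeff p (k+1)) h
      simpa [pencil, Matrix.add_apply, Matrix.smul_apply, Matrix.map_apply, smul_eq_mul,
        Polynomial.finset_sum_coeff, pencil_entry_coeff, pencil_entry_coeff_neg]
        using h2
    -- kernel triviality from the rank hypothesis
    have hker : LinearMap.ker (Matrix.fromRows A₁ C₁).mulVecLin = ⊥ := by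
      have h1 := LinearMap.finrank_range_add_finrank_ker (Matrix.fromRows A₁ C₁).mulVecLin
      rw [Module.finrank_fin_fun] at h1
      have h2 : (Matrix.fromRows A₁ C₁).rank
          + Module.finrank F (LinearMap.ker (Matrix.fromRows A₁ C₁).mulVecLin) = n := h1
      rw [hr] at h2
      have h3 : Module.finrank F (LinearMap.ker (Matrix.fromRows A₁ C₁).mulVecLin) = 0 := by
        omega
      exact Submodule.finrank_eq_zero.mp h3
    -- downward induction on coefficients of y
    set N := (Finset.univ.sup fun i => (y i).natDegree) + 1 with hN
    have hbig : ∀ (k : ℕ), N ≤ k → ∀ i, (y i).coeff k = 0 := by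
      intro k hk i
      apply Polynomial.coeff_eq_zero_of_natDegree_lt
      have : (y i).natDegree ≤ Finset.univ.sup fun i => (y i).natDegree :=
        Finset.le_sup (f := fun i => (y i).natDegree) (Finset.mem_univ i)
      omega
    have key : ∀ (m k : ℕ), N ≤ k + m → D < (k : WithBot ℕ) → ∀ i, (y i).coeff k = 0 := by
      intro m
      induction m with
      | zero => intro k hk _ i; exact hbig k (by omega) i
      | succ m ih =>
        intro k hk hDk i
        by_cases hNk : N ≤ k
        · exact hbig k hNk i
        · have hDk1 : D < ((k+1 : ℕ) : WithBot ℕ) := by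
            refine hDk.trans ?_
            exact_mod_cast Nat.lt_succ_self k
          have hy1 : ∀ i', (y i').coeff (k+1) = 0 := ih (k+1) (by omega) hDk1
          have hxk : ∀ j, (x j).coeff k = 0 := fun j =>
            Polynomial.coeff_eq_zero_of_degree_lt
              (lt_of_le_of_lt (Finset.le_sup (f := fun j => (x j).degree)
                (Finset.mem_univ j)) hDk)
          have hxk1 : ∀ j, (x j).coeff (k+1) = 0 := fun j =>
            Polynomial.coeff_eq_zero_of_degree_lt
              (lt_of_le_of_lt (Finset.le_sup (f := fun j => (x j).degree)
                (Finset.mem_univ j)) hDk1)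
          set v : Fin n → F := fun j => (y j).coeff k with hv
          have hAk : ∀ i', ∑ j, A₁ i' j * v j = 0 := by
            intro i'
            have := hcoeffA i' k
            simpa [hy1, hxk, hxk1, hv] using this
          have hCk : ∀ i', ∑ j, C₁ i' j * v j = 0 := by
            intro i'
            have h := hcoeffC i' k
            simp only [hy1, hxk, hxk1, mul_zero, neg_zero, add_zero, zero_add,
              Finset.sum_const_zero] at h
            rw [← neg_eq_zero, ← Finset.sum_neg_distrib]
            simpa [hv] using h
          have hmem : v ∈ LinearMap.ker (Matrix.fromRows A₁ C₁).mulVecLin := by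
            rw [LinearMap.mem_ker, Matrix.mulVecLin_apply, Matrix.fromRows_mulVec]
            funext s
            cases s with
            | inl i' => simpa [Matrix.mulVec, dotProduct] using hAk i'
            | inr i' => simpa [Matrix.mulVec, dotProduct] using hCk i'
          rw [hker, Submodule.mem_bot] at hmem
          exact congrFun hmem i
    have hdegy : ∀ i, (y i).degree ≤ D := by
      intro i
      rw [Polynomial.degree_le_iff_coeff_zero]
      intro m hm
      exact key N m (by omega) hm i
    refine le_antisymm (Finset.sup_le ?_) (Finset.sup_le ?_)
    · rintro (i | j) -
      · simpa using hdegy i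
      · simpa using Finset.le_sup (f := fun j => (x j).degree) (Finset.mem_univ j)
    · intro j _
      simpa using Finset.le_sup (f := fun i : Fin n ⊕ Fin r' => ((Sum.elim y x) i).degree)
        (Finset.mem_univ (Sum.inr j))
end

section
/- Let $L(\lambda) = \begin{bmatrix} A_1\lambda + A_0 & B_1\lambda + B_0 \\ -(C_1\lambda + C_0) & D_1\lambda + D_0 \end{bmatrix}$ be a linear polynomial system matrix with nonsingular state pencil $A_1\lambda+A_0$ and transfer function $T(\lambda)$. If $v(\lambda)^T = \begin{bmatrix} \tilde y(\lambda)^T & \tilde x(\lambda)^T \end{bmatrix}$ is a polynomial row vector in the left nullspace of $L(\lambda)$, then $\tilde x(\lambda)^T$ lies in the left nullspace of $T(\lambda)$; moreover, if the constant matrix $\begin{bmatrix} A_1 & B_1 \end{bmatrix}$ has full row rank $n$, then $\deg v(\lambda) = \deg \tilde x(\lambda)$. -/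
open Matrix Polynomial

set_option synthInstance.maxHeartbeats 1000000
set_option maxHeartbeats 1000000

lemma pencil_vecMul_coeff {F : Type*} [Field F] {m ι : Type*} [Fintype m]
    (M₁ M₀ : Matrix m ι F) (u : m → Polynomial F) (d : ℕ)
    (hu : ∀ i, (u i).degree ≤ (d : ℕ)) (j : ι) :
    ((u ᵥ* pencil M₁ M₀) j).coeff (d + 1) = ∑ i, (u i).coeff d * M₁ i j := by
  simp only [Matrix.vecMul, dotProduct, pencil, Matrix.add_apply, Matrix.smul_apply,
    Matrix.map_apply, smul_eq_mul]
  rw [finset_sum_coeff]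
  refine Finset.sum_congr rfl fun i _ => ?_
  have h : u i * (X * C (M₁ i j) + C (M₀ i j))
      = (u i * X) * C (M₁ i j) + u i * C (M₀ i j) := by ring
  have hz : (u i).coeff (d + 1) = 0 :=
    coeff_eq_zero_of_degree_lt ((hu i).trans_lt (by exact_mod_cast Nat.lt_succ_self d))
  have hz' : (u i).coeff (1 + d) = 0 := by rwa [Nat.add_comm] 
  rw [h, coeff_add, coeff_mul_C, coeff_mul_C, coeff_mul_X]
  simp [hz, hz']

/-- For a linear polynomial system matrix `L = [A₁λ+A₀  B₁λ+B₀; -(C₁λ+C₀)  D₁λ+D₀]`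
with nonsingular state pencil and transfer function `T`, any polynomial row
vector `vᵀ = [ỹᵀ x̃ᵀ]` in the left nullspace of `L` has `x̃ᵀ` in the left
nullspace of `T`; moreover if `[A₁ B₁]` has full row rank `n`, then
`deg v = deg x̃`. -/
theorem leftNullspace_pencil_degree {F : Type*} [Field F] {n r' q' : ℕ}
    (A₁ A₀ : Matrix (Fin n) (Fin n) F) (B₁ B₀ : Matrix (Fin n) (Fin r') F)
    (C₁ C₀ : Matrix (Fin q') (Fin n) F) (D₁ D₀ : Matrix (Fin q') (Fin r') F)
    (hA : IsUnit (ratMat (pencil A₁ A₀)).det)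
    (ty : Fin n → Polynomial F) (tx : Fin q' → Polynomial F)
    (hv : Matrix.vecMul (Sum.elim ty tx)
            (Matrix.fromBlocks (pencil A₁ A₀) (pencil B₁ B₀)
              (-(pencil C₁ C₀)) (pencil D₁ D₀)) = 0) :
    Matrix.vecMul (fun j => algebraMap (Polynomial F) (RatFunc F) (tx j))
        (ratMat (pencil D₁ D₀) + ratMat (pencil C₁ C₀) * (ratMat (pencil A₁ A₀))⁻¹
          * ratMat (pencil B₁ B₀)) = 0 ∧
    ((Matrix.fromCols A₁ B₁).rank = n →
      (Finset.univ.sup fun i : Fin n ⊕ Fin q' => ((Sum.elim ty tx) i).degree)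
        = Finset.univ.sup fun j : Fin q' => (tx j).degree) := by
  rw [Matrix.vecMul_fromBlocks, Sum.elim_comp_inl, Sum.elim_comp_inr] at hv
  have h1 : ty ᵥ* pencil A₁ A₀ + tx ᵥ* -pencil C₁ C₀ = 0 :=
    funext fun j => congrFun hv (Sum.inl j)
  have h2 : ty ᵥ* pencil B₁ B₀ + tx ᵥ* pencil D₁ D₀ = 0 :=
    funext fun j => congrFun hv (Sum.inr j)
  have h1' : ty ᵥ* pencil A₁ A₀ = tx ᵥ* pencil C₁ C₀ := by
    rwa [Matrix.vecMul_neg, add_neg_eq_zero] at h1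
  set φ := algebraMap (Polynomial F) (RatFunc F) with hφ
  have hmap : ∀ {κ ι : Type} [Fintype ι] (u : ι → Polynomial F)
      (M : Matrix ι κ (Polynomial F)),
      ((fun i => φ (u i)) ᵥ* ratMat M) = fun j => φ ((u ᵥ* M) j) := by
    intro κ ι _ u M
    funext j
    exact (RingHom.map_vecMul φ M u j).symm
  constructor
  · have e1 : ((fun j => φ (tx j)) ᵥ* ratMat (pencil C₁ C₀))
        = (fun i => φ (ty i)) ᵥ* ratMat (pencil A₁ A₀) := by
      rw [hmap, hmap, h1']
    rw [Matrix.vecMul_add]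
    simp only [← Matrix.vecMul_vecMul]
    rw [e1, Matrix.vecMul_vecMul (fun i => φ (ty i)) (ratMat (pencil A₁ A₀)),
      Matrix.mul_nonsing_inv _ hA, Matrix.vecMul_one, hmap, hmap]
    funext j
    have h2j : (tx ᵥ* pencil D₁ D₀) j + (ty ᵥ* pencil B₁ B₀) j = 0 := by
      have := congrFun h2 j
      simp only [Pi.add_apply, Pi.zero_apply] at this
      rw [add_comm]
      exact this
    show φ ((tx ᵥ* pencil D₁ D₀) j) + φ ((ty ᵥ* pencil B₁ B₀) j) = 0
    rw [← map_add, h2j, map_zero]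
  · intro hrank
    have hsum : (Finset.univ.sup fun i : Fin n ⊕ Fin q' => ((Sum.elim ty tx) i).degree)
        = max (Finset.univ.sup fun i : Fin n => (ty i).degree)
            (Finset.univ.sup fun j : Fin q' => (tx j).degree) := by
      apply le_antisymm
      · refine Finset.sup_le fun i _ => ?_
        cases i with
        | inl i => exact le_max_of_le_left (Finset.le_sup (f := fun i => (ty i).degree) (Finset.mem_univ i))
        | inr j => exact le_max_of_le_right (Finset.le_sup (f := fun j => (tx j).degree) (Finset.mem_univ j))
      · refine max_le (Finset.sup_le fun i _ => ?_) (Finset.sup_le fun j _ => ?_)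
        · exact Finset.le_sup (f := fun i : Fin n ⊕ Fin q' => ((Sum.elim ty tx) i).degree)
            (Finset.mem_univ (Sum.inl i))
        · exact Finset.le_sup (f := fun i : Fin n ⊕ Fin q' => ((Sum.elim ty tx) i).degree)
            (Finset.mem_univ (Sum.inr j))
    rw [hsum]
    rcases le_or_gt (Finset.univ.sup fun i : Fin n => (ty i).degree)
        (Finset.univ.sup fun j : Fin q' => (tx j).degree) with h | h
    · exact max_eq_right h
    · exfalso
      have hSybot : (Finset.univ.sup fun i : Fin n => (ty i).degree) ≠ ⊥ := by
        intro hb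
        rw [hb] at h
        exact not_lt_bot h
      have hne : (Finset.univ : Finset (Fin n)).Nonempty := by
        by_contra hemp
        rw [Finset.not_nonempty_iff_eq_empty] at hemp
        rw [hemp, Finset.sup_empty] at hSybot
        exact hSybot rfl
      obtain ⟨i₀, -, hi₀⟩ := Finset.exists_mem_eq_sup Finset.univ hne
        (fun i => (ty i).degree)
      have hty0 : ty i₀ ≠ 0 := by
        intro h0
        rw [h0, degree_zero] at hi₀
        exact hSybot hi₀
      set d := (ty i₀).natDegree with hdd
      have hdeg : (ty i₀).degree = (d : ℕ) := degree_eq_natDegree hty0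
      have hd : ∀ i, (ty i).degree ≤ (d : ℕ) := fun i => by
        rw [← hdeg, ← hi₀]
        exact Finset.le_sup (f := fun i => (ty i).degree) (Finset.mem_univ i)
      have htx : ∀ k, (tx k).degree < (d : ℕ) := fun k => by
        rw [← hdeg, ← hi₀]
        exact lt_of_le_of_lt (Finset.le_sup (f := fun k => (tx k).degree) (Finset.mem_univ k)) h
      have htxd : ∀ k (m : ℕ), d ≤ m → (tx k).coeff m = 0 := fun k m hm =>
        coeff_eq_zero_of_degree_lt (lt_of_lt_of_le (htx k) (by exact_mod_cast hm))
      set w : Fin n → F := fun i => (ty i).coeff d with hw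
      have hpcn : -pencil C₁ C₀ = pencil (-C₁) (-C₀) := by
        ext i j
        simp [pencil]
        ring
      have hwA : w ᵥ* A₁ = 0 := by
        funext j
        have hc : ((ty ᵥ* pencil A₁ A₀) j).coeff (d + 1)
            + ((tx ᵥ* -pencil C₁ C₀) j).coeff (d + 1) = 0 := by
          rw [← coeff_add, ← Pi.add_apply]
          rw [h1]
          simp
        rw [pencil_vecMul_coeff A₁ A₀ ty d hd j, hpcn,
          pencil_vecMul_coeff (-C₁) (-C₀) tx d (fun k => (htx k).le) j] at hc
        have hz : (∑ k, (tx k).coeff d * (-C₁) k j) = 0 := by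
          refine Finset.sum_eq_zero fun k _ => ?_
          rw [htxd k d le_rfl, zero_mul]
        rw [hz, add_zero] at hc
        exact hc
      have hwB : w ᵥ* B₁ = 0 := by
        funext j
        have hc : ((ty ᵥ* pencil B₁ B₀) j).coeff (d + 1)
            + ((tx ᵥ* pencil D₁ D₀) j).coeff (d + 1) = 0 := by
          rw [← coeff_add, ← Pi.add_apply]
          rw [h2]
          simp
        rw [pencil_vecMul_coeff B₁ B₀ ty d hd j,
          pencil_vecMul_coeff D₁ D₀ tx d (fun k => (htx k).le) j] at hc
        have hz : (∑ k, (tx k).coeff d * D₁ k j) = 0 := by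
          refine Finset.sum_eq_zero fun k _ => ?_
          rw [htxd k d le_rfl, zero_mul]
        rw [hz, add_zero] at hc
        exact hc
      have hwM : w ᵥ* (Matrix.fromCols A₁ B₁) = 0 := by
        rw [Matrix.vecMul_fromCols, hwA, hwB]
        ext (j | j) <;> simp
      have hrk : ((Matrix.fromCols A₁ B₁)ᵀ).rank = n := by
        rw [Matrix.rank_transpose]
        exact hrank
      have hker : LinearMap.ker ((Matrix.fromCols A₁ B₁)ᵀ).mulVecLin = ⊥ := by
        have hadd := LinearMap.finrank_range_add_finrank_ker
          ((Matrix.fromCols A₁ B₁)ᵀ).mulVecLin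
        rw [Matrix.rank] at hrk
        have hfin : Module.finrank F (Fin n → F) = n := by simp
        rw [hfin, hrk] at hadd
        have h0 : Module.finrank F
            (LinearMap.ker ((Matrix.fromCols A₁ B₁)ᵀ).mulVecLin) = 0 := by omega
        exact Submodule.finrank_eq_zero.mp h0
      have hw0 : w = 0 := by
        have hmem : w ∈ LinearMap.ker ((Matrix.fromCols A₁ B₁)ᵀ).mulVecLin := by
          rw [LinearMap.mem_ker, Matrix.mulVecLin_apply, Matrix.mulVec_transpose]
          exact hwM
        rw [hker, Submodule.mem_bot] at hmem
        exact hmem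
      have hwi : w i₀ ≠ 0 := by
        intro h0
        apply hty0
        rw [← Polynomial.leadingCoeff_eq_zero, ← Polynomial.coeff_natDegree]
        exact h0
      rw [hw0] at hwi
      exact hwi rfl
end

section
/- Let $R(\lambda)=D(\lambda)+C(\lambda)A(\lambda)^{-1}B(\lambda)$ with $A(\lambda)$ nonsingular. Let $L_A(\lambda)=\begin{bmatrix} M_A(\lambda)\\ K_A(\lambda)\end{bmatrix}$ be invertible over $\mathbb{F}(\lambda)$ with $L_A(\lambda)N_A(\lambda)^T = \begin{bmatrix} A(\lambda) \\ 0 \end{bmatrix}$ (so $M_A(\lambda)N_A(\lambda)^T = A(\lambda)$ and $K_A(\lambda)N_A(\lambda)^T = 0$), and let $M_C(\lambda), M_B(\lambda), M_D(\lambda), K_D(\lambda), N_D(\lambda)$ satisfy $M_C(\lambda)N_A(\lambda)^T = C(\lambda)$, $M_B(\lambda)N_D(\lambda)^T = B(\lambda)$, $M_D(\lambda)N_D(\lambda)^T = D(\lambda)$ and $K_D(\lambda)N_D(\lambda)^T = 0$. Then the transfer function $\widehat R(\lambda)$ of $\mathcal{L}(\lambda) = \begin{bmatrix} M_A & M_B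 \\ K_A & 0 \\ -M_C & M_D \\ 0 & K_D \end{bmatrix}$ (with state matrix $L_A(\lambda)$) equals $\begin{bmatrix} M_D(\lambda)+C(\lambda)A(\lambda)^{-1}M_B(\lambda) \\ K_D(\lambda) \end{bmatrix}$, and satisfies $\widehat R(\lambda) N_D(\lambda)^T = \begin{bmatrix} R(\lambda) \\ 0 \end{bmatrix}$. -/
open Matrix Polynomial

set_option synthInstance.maxHeartbeats 1000000
set_option maxHeartbeats 1000000

lemma ratMat_mul {F : Type*} [Field F] {α β γ : Type*} [Fintype β]
    (M : Matrix α β (Polynomial F)) (N : Matrix β γ (Polynomial F)) :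
    ratMat (M * N) = ratMat M * ratMat N :=
  Matrix.map_mul

lemma ratMat_zero {F : Type*} [Field F] {α β : Type*} :
    ratMat (0 : Matrix α β (Polynomial F)) = 0 :=
  Matrix.map_zero _ (map_zero _)

lemma ratMat_fromRows {F : Type*} [Field F] {α₁ α₂ β : Type*}
    (M : Matrix α₁ β (Polynomial F)) (N : Matrix α₂ β (Polynomial F)) :
    ratMat (Matrix.fromRows M N) = Matrix.fromRows (ratMat M) (ratMat N) := by
  ext i j; cases i <;> rfl

lemma fromRows_add' {R α₁ α₂ β : Type*} [AddCommMonoid R]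
    (M M' : Matrix α₁ β R) (N N' : Matrix α₂ β R) :
    Matrix.fromRows M N + Matrix.fromRows M' N'
      = Matrix.fromRows (M + M') (N + N') := by
  ext i j; cases i <;> rfl

/-- The transfer function `R̂` of the linear polynomial system matrix
`𝓛 = [[M_A, M_B], [K_A, 0], [-M_C, M_D], [0, K_D]]` with state matrix
`L_A = [M_A; K_A]` equals `[M_D + C A⁻¹ M_B; K_D]` and satisfies
`R̂ · N_Dᵀ = [R; 0]` where `R = D + C A⁻¹ B`. -/
theorem transferFunction_of_linearization {F : Type*} [Field F] {n m p : ℕ}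
    {β δ κD : Type*} [Fintype β] [DecidableEq β] [Fintype δ] [Fintype κD]
    (A : Matrix (Fin n) (Fin n) (Polynomial F))
    (B : Matrix (Fin n) (Fin m) (Polynomial F))
    (C : Matrix (Fin p) (Fin n) (Polynomial F))
    (D : Matrix (Fin p) (Fin m) (Polynomial F))
    (MA : Matrix (Fin n) (Fin n ⊕ β) (Polynomial F))
    (KA : Matrix β (Fin n ⊕ β) (Polynomial F))
    (NAt : Matrix (Fin n ⊕ β) (Fin n) (Polynomial F))
    (MD : Matrix (Fin p) κD (Polynomial F))
    (KD : Matrix δ κD (Polynomial F))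
    (NDt : Matrix κD (Fin m) (Polynomial F))
    (MC : Matrix (Fin p) (Fin n ⊕ β) (Polynomial F))
    (MB : Matrix (Fin n) κD (Polynomial F))
    (hA : IsUnit (ratMat A).det)
    (hLA : IsUnit (ratMat (Matrix.fromRows MA KA)).det)
    (hNA : Matrix.fromRows MA KA * NAt
            = Matrix.fromRows A (0 : Matrix β (Fin n) (Polynomial F)))
    (hC : MC * NAt = C)
    (hB : MB * NDt = B)
    (hD : MD * NDt = D)
    (hKD : KD * NDt = 0) :
    ratMat (Matrix.fromRows MD KD)
        + ratMat (Matrix.fromRows MC (0 : Matrix δ (Fin n ⊕ β) (Polynomial F)))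
          * (ratMat (Matrix.fromRows MA KA))⁻¹
          * ratMat (Matrix.fromRows MB (0 : Matrix β κD (Polynomial F)))
      = Matrix.fromRows
          (ratMat MD + ratMat C * (ratMat A)⁻¹ * ratMat MB) (ratMat KD) ∧
    (ratMat (Matrix.fromRows MD KD)
        + ratMat (Matrix.fromRows MC (0 : Matrix δ (Fin n ⊕ β) (Polynomial F)))
          * (ratMat (Matrix.fromRows MA KA))⁻¹
          * ratMat (Matrix.fromRows MB (0 : Matrix β κD (Polynomial F))))
        * ratMat NDt
      = Matrix.fromRows
          (ratMat D + ratMat C * (ratMat A)⁻¹ * ratMat B)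
          (0 : Matrix δ (Fin m) (RatFunc F)) := by
  set LA' := ratMat (Matrix.fromRows MA KA) with hLA'
  set A' := ratMat A
  set E : Matrix (Fin n ⊕ β) (Fin n) (RatFunc F) :=
    Matrix.fromRows (1 : Matrix (Fin n) (Fin n) (RatFunc F)) 0 with hE
  -- L_A' * NAt' = E * A'
  have h1 : LA' * ratMat NAt = E * A' := by
    rw [hLA', ← ratMat_mul, hNA, ratMat_fromRows, ratMat_zero, hE,
      Matrix.fromRows_mul, Matrix.one_mul, Matrix.zero_mul]
  have hNAt : ratMat NAt = LA'⁻¹ * (E * A') := by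
    rw [← h1, ← Matrix.mul_assoc, Matrix.nonsing_inv_mul _ hLA, Matrix.one_mul]
  have key : LA'⁻¹ * E = ratMat NAt * A'⁻¹ := by
    rw [hNAt, Matrix.mul_assoc, Matrix.mul_assoc, Matrix.mul_nonsing_inv _ hA,
      Matrix.mul_one]
  -- the cross term
  have hMB0 : ratMat (Matrix.fromRows MB (0 : Matrix β κD (Polynomial F)))
      = E * ratMat MB := by
    rw [ratMat_fromRows, ratMat_zero, hE, Matrix.fromRows_mul, Matrix.one_mul, Matrix.zero_mul]
  have hcross :
      ratMat (Matrix.fromRows MC (0 : Matrix δ (Fin n ⊕ β) (Polynomial F)))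
          * LA'⁻¹ * ratMat (Matrix.fromRows MB (0 : Matrix β κD (Polynomial F)))
        = Matrix.fromRows (ratMat C * A'⁻¹ * ratMat MB)
            (0 : Matrix δ κD (RatFunc F)) := by
    rw [hMB0, Matrix.mul_assoc, ← Matrix.mul_assoc LA'⁻¹, key, ratMat_fromRows,
      ratMat_zero, Matrix.fromRows_mul, Matrix.zero_mul, ← Matrix.mul_assoc,
      ← Matrix.mul_assoc, ← ratMat_mul, hC]
  have h2 :
      ratMat (Matrix.fromRows MD KD)
          + ratMat (Matrix.fromRows MC (0 : Matrix δ (Fin n ⊕ β) (Polynomial F)))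
            * LA'⁻¹ * ratMat (Matrix.fromRows MB (0 : Matrix β κD (Polynomial F)))
        = Matrix.fromRows (ratMat MD + ratMat C * A'⁻¹ * ratMat MB) (ratMat KD) := by
    rw [hcross, ratMat_fromRows, fromRows_add', add_zero]
  refine ⟨h2, ?_⟩
  rw [h2, Matrix.fromRows_mul, Matrix.add_mul, ← ratMat_mul MD NDt, hD,
    Matrix.mul_assoc, ← ratMat_mul MB NDt, hB, ← ratMat_mul KD NDt, hKD,
    ratMat_zero]
end

section
/- Under the setup of the previous statement (transfer function $\widehat R(\lambda) = \begin{bmatrix} M_R(\lambda) \\ K_D(\lambda) \end{bmatrix}$ with $M_R(\lambda) := M_D(\lambda)+C(\lambda)A(\lambda)^{-1}M_B(\lambda)$), suppose additionally there exist polynomial matrices $\widehat K_D(\lambda)$ and $\widehat N_D(\lambda)$ such that $\begin{bmatrix} K_D(\lambda) \\ \widehat K_D(\lambda) \end{bmatrix} \begin{bmatrix} \widehat N_D(\lambda)^T & N_D(\lambda)^T \end{bmatrix} = I$, i.e. $K_D\widehat N_D^T = I$, $K_D N_D^T = 0$, $\widehat K_D \widehat N_D^T = 0$, $\widehat K_D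 N_D^T = I_m$, and $\widehat N_D^T K_D + N_D^T \widehat K_D = I$. Then $\begin{bmatrix} I_p & -M_R(\lambda)\widehat N_D(\lambda)^T \end{bmatrix} \widehat R(\lambda) = R(\lambda)\,\widehat K_D(\lambda)$. -/
open Matrix Polynomial

set_option synthInstance.maxHeartbeats 1000000
set_option maxHeartbeats 1000000

lemma ratMat_mul_s12 {F : Type*} [Field F] {a b c : Type*} [Fintype b]
    (X : Matrix a b (Polynomial F)) (Y : Matrix b c (Polynomial F)) :
    ratMat (X * Y) = ratMat X * ratMat Y := by
  simp [ratMat, Matrix.map_mul]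

/-- Left-sided factorization: with `R̂ = [M_R; K_D]`,
`M_R = M_D + C A⁻¹ M_B`, and dual bases satisfying
`[K_D; K̂_D]·[N̂_Dᵀ N_Dᵀ] = I`, one has
`[I_p  -M_R N̂_Dᵀ] · R̂ = R · K̂_D`. -/
theorem left_sided_factorization {F : Type*} [Field F] {n m p : ℕ}
    {δ κD : Type*} [Fintype δ] [DecidableEq δ] [Fintype κD] [DecidableEq κD]
    (A : Matrix (Fin n) (Fin n) (Polynomial F))
    (B : Matrix (Fin n) (Fin m) (Polynomial F))
    (C : Matrix (Fin p) (Fin n) (Polynomial F))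
    (D : Matrix (Fin p) (Fin m) (Polynomial F))
    (MD : Matrix (Fin p) κD (Polynomial F))
    (MB : Matrix (Fin n) κD (Polynomial F))
    (KD : Matrix δ κD (Polynomial F))
    (KhatD : Matrix (Fin m) κD (Polynomial F))
    (NDt : Matrix κD (Fin m) (Polynomial F))
    (NhatDt : Matrix κD δ (Polynomial F))
    (hA : IsUnit (ratMat A).det)
    (hD : MD * NDt = D)
    (hB : MB * NDt = B)
    (h1 : KD * NhatDt = 1)
    (h2 : KD * NDt = 0)
    (h3 : KhatD * NhatDt = 0)
    (h4 : KhatD * NDt = 1)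
    (h5 : NhatDt * KD + NDt * KhatD = 1) :
    Matrix.fromCols (1 : Matrix (Fin p) (Fin p) (RatFunc F))
        (-((ratMat MD + ratMat C * (ratMat A)⁻¹ * ratMat MB) * ratMat NhatDt))
      * Matrix.fromRows
          (ratMat MD + ratMat C * (ratMat A)⁻¹ * ratMat MB) (ratMat KD)
      = (ratMat D + ratMat C * (ratMat A)⁻¹ * ratMat B) * ratMat KhatD := by
  set MR := ratMat MD + ratMat C * (ratMat A)⁻¹ * ratMat MB with hMR
  rw [Matrix.fromCols_mul_fromRows]
  have key : MR * ratMat NDt = ratMat D + ratMat C * (ratMat A)⁻¹ * ratMat B := by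
    rw [hMR, Matrix.add_mul, ← hD, ← hB, ratMat_mul_s12, ratMat_mul_s12,
      Matrix.mul_assoc, Matrix.mul_assoc]
  have h5' : ratMat NhatDt * ratMat KD = 1 - ratMat NDt * ratMat KhatD := by
    rw [← ratMat_mul_s12, ← ratMat_mul_s12, eq_sub_iff_add_eq]
    unfold ratMat
    rw [← Matrix.map_add _ (fun a b => map_add _ a b), h5]
    simp
  rw [Matrix.one_mul, Matrix.neg_mul, Matrix.mul_assoc, h5', Matrix.mul_sub,
    Matrix.mul_one, ← Matrix.mul_assoc, key]
  abel
end

section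
/- Let $K_d(\lambda)$ be the $(m-1)\times m$ linear polynomial matrix whose $i$-th row, for $1\leq i \leq m-2$, has entries $-\tfrac{1}{2}, \lambda, -\tfrac{1}{2}$ in columns $i, i+1, i+2$ (zeros elsewhere), and whose last row has entries $-1, \lambda$ in columns $m-1, m$. Let $N_d(\lambda)^T = \begin{bmatrix} \phi_{m-1}(\lambda) & \phi_{m-2}(\lambda) & \cdots & \phi_1(\lambda) & \phi_0(\lambda) \end{bmatrix}^T$ where $\phi_j$ are Chebyshev polynomials of the first kind. Then $K_d(\lambda)N_d(\lambda)^T = 0$, and for every $\lambda_0$, the constant matrix $K_d(\lambda_0)$ has full row rank $m-1$. -/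
open Matrix Polynomial

set_option synthInstance.maxHeartbeats 1000000
set_option maxHeartbeats 1000000

/-- The Chebyshev pencil `K_d(λ)`: row `i` (for `i ≤ m-3`) has entries
`-1/2, λ, -1/2` in columns `i, i+1, i+2`; the last row (`i = m-2`) has entries
`-1, λ` in columns `m-2, m-1`. -/
noncomputable def chebK (F : Type*) [Field F] (m : ℕ) :
    Matrix (Fin (m - 1)) (Fin m) (Polynomial F) :=
  Matrix.of fun i j =>
    if (j : ℕ) = (i : ℕ) then
      (if (i : ℕ) = m - 2 then -1 else Polynomial.C (-(2 : F)⁻¹))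
    else if (j : ℕ) = (i : ℕ) + 1 then Polynomial.X
    else if (j : ℕ) = (i : ℕ) + 2 then Polynomial.C (-(2 : F)⁻¹)
    else 0

private lemma sum_ite_val {m : ℕ} {M : Type*} [AddCommMonoid M] (k : ℕ) (f : Fin m → M) :
    (∑ j : Fin m, if (j : ℕ) = k then f j else 0) =
      if hk : k < m then f ⟨k, hk⟩ else 0 := by
  split_ifs with hk
  · rw [Finset.sum_eq_single (⟨k, hk⟩ : Fin m)]
    · simp
    · intro j _ hj
      rw [if_neg]
      simpa [Fin.ext_iff] using hj
    · simp
  · apply Finset.sum_eq_zero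
    intro j _
    rw [if_neg]
    omega

/-- `K_d(λ) N_d(λ)ᵀ = 0` for `N_d(λ)ᵀ = [φ_{m-1}, …, φ₁, φ₀]ᵀ` in the
Chebyshev basis, and every evaluation `K_d(λ₀)` has full row rank `m - 1`. -/
theorem chebyshev_pencil_dual_basis {F : Type*} [Field F] (h2 : (2 : F) ≠ 0)
    {m : ℕ} (hm : 2 ≤ m) :
    (chebK F m).mulVec
        (fun j : Fin m => Polynomial.Chebyshev.T F ((m : ℤ) - 1 - (j : ℕ))) = 0 ∧
    (∀ lam0 : F, ((chebK F m).map (Polynomial.eval lam0)).rank = m - 1) := by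
  have hC2 : Polynomial.C (-(2 : F)⁻¹) * 2 = -1 := by
    rw [show (2 : Polynomial F) = Polynomial.C 2 from (map_ofNat Polynomial.C 2).symm,
      ← Polynomial.C_mul]
    rw [show -(2 : F)⁻¹ * 2 = -1 by field_simp]
    simp
  constructor
  · funext i
    have hi : (i : ℕ) < m - 1 := i.2
    have hsplit : ∀ j : Fin m,
        chebK F m i j =
          (if (j : ℕ) = (i : ℕ) then
              (if (i : ℕ) = m - 2 then -1 else Polynomial.C (-(2 : F)⁻¹)) else 0) +
          (if (j : ℕ) = (i : ℕ) + 1 then Polynomial.X else 0) +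
          (if (j : ℕ) = (i : ℕ) + 2 then Polynomial.C (-(2 : F)⁻¹) else 0) := by
      intro j
      show (if (j : ℕ) = (i : ℕ) then _ else _) = _
      split_ifs <;> first | omega | ring1
    simp only [Matrix.mulVec, dotProduct, hsplit, add_mul, ite_mul, zero_mul,
      Finset.sum_add_distrib, sum_ite_val, Pi.zero_apply]
    by_cases hlast : (i : ℕ) = m - 2
    · rw [dif_pos (show (i : ℕ) < m by omega), dif_pos (show (i : ℕ) + 1 < m by omega),
        dif_neg (show ¬ (i : ℕ) + 2 < m by omega), if_pos hlast]
      have e1 : (m : ℤ) - 1 - ((⟨(i : ℕ), by omega⟩ : Fin m) : ℕ) = 1 := by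
        simp only [Fin.val_mk]; omega
      have e2 : (m : ℤ) - 1 - ((⟨(i : ℕ) + 1, by omega⟩ : Fin m) : ℕ) = 0 := by
        simp only [Fin.val_mk]; push_cast; omega
      rw [e1, e2, Polynomial.Chebyshev.T_one, Polynomial.Chebyshev.T_zero]
      ring
    · rw [dif_pos (show (i : ℕ) < m by omega), dif_pos (show (i : ℕ) + 1 < m by omega),
        dif_pos (show (i : ℕ) + 2 < m by omega), if_neg hlast]
      set n : ℤ := (m : ℤ) - 3 - (i : ℕ) with hn
      have e1 : (m : ℤ) - 1 - ((⟨(i : ℕ), by omega⟩ : Fin m) : ℕ) = n + 2 := by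
        simp only [Fin.val_mk, hn]; ring
      have e2 : (m : ℤ) - 1 - ((⟨(i : ℕ) + 1, by omega⟩ : Fin m) : ℕ) = n + 1 := by
        simp only [Fin.val_mk, hn]; push_cast; ring
      have e3 : (m : ℤ) - 1 - ((⟨(i : ℕ) + 2, by omega⟩ : Fin m) : ℕ) = n := by
        simp only [Fin.val_mk, hn]; push_cast; ring
      rw [e1, e2, e3, Polynomial.Chebyshev.T_add_two]
      linear_combination (Polynomial.X * Polynomial.Chebyshev.T F (n + 1)) * hC2
  · intro lam0
    set A := (chebK F m).map (Polynomial.eval lam0) with hA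
    have hcast : m - 1 ≤ m := by omega
    set f : Fin (m - 1) → Fin m := Fin.castLE hcast with hf
    set B := A.submatrix id f with hBdef
    have hBtri : B.BlockTriangular id := by
      intro i j hij
      have hji : (j : ℕ) < (i : ℕ) := hij
      show Polynomial.eval lam0 (chebK F m i (f j)) = 0
      have hfv : ((f j : Fin m) : ℕ) = (j : ℕ) := rfl
      show Polynomial.eval lam0
        (if ((f j : Fin m) : ℕ) = (i : ℕ) then _ else _) = 0
      rw [if_neg (by omega), if_neg (by omega), if_neg (by omega)]
      simp
    have hBdiag : ∀ i : Fin (m - 1), B i i ≠ 0 := by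
      intro i
      show Polynomial.eval lam0 (chebK F m i (f i)) ≠ 0
      have hfv : ((f i : Fin m) : ℕ) = (i : ℕ) := rfl
      show Polynomial.eval lam0
        (if ((f i : Fin m) : ℕ) = (i : ℕ) then _ else _) ≠ 0
      rw [if_pos hfv]
      split_ifs
      · simp
      · simp only [Polynomial.eval_C]
        exact neg_ne_zero.2 (inv_ne_zero h2)
    have hdet : B.det ≠ 0 := by
      rw [Matrix.det_of_upperTriangular hBtri]
      exact Finset.prod_ne_zero_iff.2 fun i _ => hBdiag i
    have hBrank : B.rank = m - 1 := by
      rw [Matrix.rank_of_isUnit B ((Matrix.isUnit_iff_isUnit_det B).2 hdet.isUnit)]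
      simp
    have hmul : B = A * ((1 : Matrix (Fin m) (Fin m) F).submatrix (Equiv.refl (Fin m)) f) := by
      rw [Matrix.mul_submatrix_one]
      rfl
    have hle : B.rank ≤ A.rank := by
      rw [hmul]; exact Matrix.rank_mul_le_left _ _
    have hub : A.rank ≤ m - 1 := by
      simpa using A.rank_le_card_height
    omega
end
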